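/- Let m, n ≥ 0. Then Q^{(1^m)}·P^{(n)} = P^{(n)}·Q^{(1^m)} + [2]·P^{(n−1)}·Q^{(1^{m−1})} + P^{(n−2)}·Q^{(1^{m−2})} in A. (This is the same-node case i = j of the additional mixed relations stated after Lemma 1.) -/

import Mathlib

open Finset

/-- The quantum integer `[n] = (q^n - q^{-n})/(q - q^{-1})` in `K = ℚ(q)`,
where `q` is the variable `RatFunc.X`. -/
noncomputable def qint (n : ℤ) : RatFunc ℚ :=
  (RatFunc.X ^ n - RatFunc.X ^ (-n)) / (RatFunc.X - RatFunc.X⁻¹)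

instance : CharZero (RatFunc ℚ) :=
  charZero_of_injective_algebraMap (algebraMap ℚ (RatFunc ℚ)).injective

lemma X_ne : (RatFunc.X : RatFunc ℚ) ≠ 0 := RatFunc.X_ne_zero

lemma X_pow_ne_one (k : ℕ) (hk : k ≠ 0) : (RatFunc.X : RatFunc ℚ) ^ k ≠ 1 := by
  intro h
  have h2 : (algebraMap (Polynomial ℚ) (RatFunc ℚ)) (Polynomial.X ^ k) =
      (algebraMap (Polynomial ℚ) (RatFunc ℚ)) 1 := by
    simpa [map_pow, RatFunc.algebraMap_X] using h
  have h3 := RatFunc.algebraMap_injective ℚ h2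
  have := congrArg Polynomial.natDegree h3
  simp [Polynomial.natDegree_X_pow] at this
  exact hk this

lemma den_ne : (RatFunc.X - RatFunc.X⁻¹ : RatFunc ℚ) ≠ 0 := by
  intro h
  rw [sub_eq_zero] at h
  have h2 : (RatFunc.X : RatFunc ℚ) ^ 2 = 1 := by
    rw [sq]; nth_rewrite 2 [h]; exact mul_inv_cancel₀ X_ne
  exact X_pow_ne_one 2 (by norm_num) h2

lemma qint_nat_ne_zero (k : ℕ) (hk : k ≠ 0) : qint k ≠ 0 := by
  unfold qint
  apply div_ne_zero _ den_ne
  intro h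
  rw [sub_eq_zero] at h
  have h2 : (RatFunc.X : RatFunc ℚ) ^ (2*k) = 1 := by
    have : (RatFunc.X:RatFunc ℚ) ^ ((k:ℤ) + k) = RatFunc.X ^ ((k:ℤ) + (-k)) := by
      rw [zpow_add₀ X_ne, zpow_add₀ X_ne]; rw [h]
    simpa [← zpow_natCast, two_mul, push_cast] using this
  exact X_pow_ne_one (2*k) (by omega) h2

lemma qint_two_mul (k : ℤ) :
    qint (2 * k) = qint k * (RatFunc.X ^ k + RatFunc.X ^ (-k)) := by
  unfold qint
  rw [div_mul_eq_mul_div]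
  congr 1
  rw [two_mul, neg_add, zpow_add₀ X_ne, zpow_add₀ X_ne]
  ring

lemma qint_one : qint 1 = 1 := by
  unfold qint
  rw [zpow_one, zpow_neg, zpow_one, div_self den_ne]

lemma qint_two : qint 2 = RatFunc.X + RatFunc.X⁻¹ := by
  have := qint_two_mul 1
  simpa [qint_one, zpow_neg] using this

/-- the coefficient `(-1)^(k+1) (q^k + q^{-k})`, with value 0 at k = 0. -/
noncomputable def wcoef (k : ℕ) : RatFunc ℚ :=
  if k = 0 then 0 else (-1)^(k+1) * (RatFunc.X ^ (k:ℤ) + RatFunc.X ^ (-(k:ℤ)))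

lemma wcoef_zero : wcoef 0 = 0 := rfl

lemma wcoef_pos (k : ℕ) (h : k ≠ 0) :
    wcoef k = (-1)^(k+1) * (RatFunc.X ^ (k:ℤ) + RatFunc.X ^ (-(k:ℤ))) := if_neg h

lemma g_rec (c : ℤ) :
    RatFunc.X ^ (c+2) + RatFunc.X ^ (-(c+2)) =
      qint 2 * (RatFunc.X ^ (c+1) + RatFunc.X ^ (-(c+1))) - (RatFunc.X ^ c + RatFunc.X ^ (-c)) := by
  have hX := X_ne
  have ht : (RatFunc.X : RatFunc ℚ) ^ c ≠ 0 := zpow_ne_zero c hX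
  rw [qint_two, show c + 2 = c + 1 + 1 by ring]
  simp only [neg_add, zpow_add₀ hX, zpow_neg, zpow_one]
  field_simp
  ring

lemma wcoef_one : wcoef 1 = qint 2 := by
  simp [wcoef, qint_two, zpow_neg]

lemma dcoef_two : wcoef 2 + qint 2 * wcoef 1 + wcoef 0 = 2 := by
  have h := g_rec 0
  simp only [zero_add, zpow_zero, zpow_one] at h
  rw [zpow_neg] at h
  norm_num at h
  rw [wcoef_pos 2 two_ne_zero, wcoef_pos 1 one_ne_zero, wcoef_zero]
  norm_num [zpow_neg]
  linear_combination -h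

lemma dcoef_ge3 (i : ℕ) :
    wcoef (i+3) + qint 2 * wcoef (i+2) + wcoef (i+1) = 0 := by
  have h := g_rec ((i:ℤ) + 1)
  rw [wcoef_pos _ (by omega), wcoef_pos _ (by omega), wcoef_pos _ (by omega)]
  have e3 : ((i+3:ℕ):ℤ) = (i:ℤ) + 1 + 2 := by push_cast; ring
  have e2 : ((i+2:ℕ):ℤ) = (i:ℤ) + 1 + 1 := by push_cast; ring
  have e1 : ((i+1:ℕ):ℤ) = (i:ℤ) + 1 := by push_cast; ring
  rw [e3, e2, e1, h]
  have s3 : (-1 : RatFunc ℚ)^(i+3+1) = (-1)^i := by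
    rw [show i+3+1 = i + 4 by ring, pow_add]; norm_num
  have s2 : (-1 : RatFunc ℚ)^(i+2+1) = -(-1)^i := by
    rw [show i+2+1 = i + 3 by ring, pow_add]; ring_nf
  have s1 : (-1 : RatFunc ℚ)^(i+1+1) = (-1)^i := by
    rw [show i+1+1 = i + 2 by ring, pow_add]; norm_num
  rw [s3, s2, s1]
  ring

lemma cQ_mul (k : ℕ) (hk : k ≠ 0) :
    ((-1 : RatFunc ℚ)^(k+1) * (k : RatFunc ℚ) / qint k) * (qint (2 * k) / (k : RatFunc ℚ))
      = wcoef k := by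
  have h1 : qint (k:ℤ) ≠ 0 := qint_nat_ne_zero k hk
  have h2 : ((k : RatFunc ℚ)) ≠ 0 := Nat.cast_ne_zero.mpr hk
  rw [qint_two_mul (k:ℤ), wcoef_pos k hk]
  field_simp

section

variable {A : Type*} [Ring A] [Algebra (RatFunc ℚ) A]

/-- Generic lemma: extend the defining recursion of `R` to sums over a larger range
and arbitrary integer index. -/
lemma sum_rec_ext (c : ℕ → RatFunc ℚ) (x : ℕ → A) (R : ℤ → A)
    (hneg : ∀ k : ℤ, k < 0 → R k = 0)
    (hrec : ∀ n : ℕ, 1 ≤ n →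
      (n : RatFunc ℚ) • R n = ∑ k ∈ Icc 1 n, c k • (x k * R ((n:ℤ) - k)))
    (m : ℕ) (M : ℤ) (hM : M ≤ m) :
    ∑ k ∈ Icc 1 m, c k • (x k * R (M - k)) = (M : RatFunc ℚ) • R M := by
  rcases lt_trichotomy M 0 with hM0 | hM0 | hM0
  · rw [hneg M hM0, smul_zero]
    apply Finset.sum_eq_zero
    intro k hk
    rw [hneg (M - k) (by simp at hk; omega), mul_zero, smul_zero]
  · subst hM0
    simp only [Int.cast_zero, zero_smul]
    apply Finset.sum_eq_zero
    intro k hk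
    simp only [mem_Icc] at hk
    rw [hneg (0 - k) (by omega), mul_zero, smul_zero]
  · obtain ⟨μ, rfl⟩ : ∃ μ : ℕ, M = (μ:ℤ) := ⟨M.toNat, (Int.toNat_of_nonneg hM0.le).symm⟩
    have hμ1 : 1 ≤ μ := by exact_mod_cast hM0
    have hμm : μ ≤ m := by exact_mod_cast hM
    rw [← Finset.sum_subset (Finset.Icc_subset_Icc_right hμm)]
    · rw [← hrec μ hμ1]; norm_cast
    · intro k hk hk'
      simp only [mem_Icc] at hk hk'
      rw [hneg ((μ:ℤ) - k) (by omega), mul_zero, smul_zero]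

/-- Telescoping evaluation of the commutator-contribution sum. -/
lemma ssum (m : ℕ) (u : ℕ → A) (hu : ∀ j, m < j → u j = 0) :
    ∑ k ∈ Icc 1 m, (wcoef k • u k + (qint 2 * wcoef k) • u (k+1) + wcoef k • u (k+2))
      = qint 2 • u 1 + (2 : RatFunc ℚ) • u 2 := by
  rw [Finset.sum_add_distrib, Finset.sum_add_distrib]
  have hsub : Icc 1 m ⊆ Icc 1 (m+2) := Finset.Icc_subset_Icc_right (by omega)
  have S1 : ∑ k ∈ Icc 1 m, wcoef k • u k = ∑ j ∈ Icc 1 (m+2), wcoef j • u j := by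
    apply Finset.sum_subset hsub
    intro j hj hj'
    simp only [mem_Icc] at hj hj'
    rw [hu j (by omega), smul_zero]
  have S2 : ∑ k ∈ Icc 1 m, (qint 2 * wcoef k) • u (k+1)
      = ∑ j ∈ Icc 1 (m+2), (qint 2 * wcoef (j-1)) • u j := by
    have e2 : ∑ k ∈ Icc 1 m, (qint 2 * wcoef k) • u (k+1)
        = ∑ j ∈ Icc 2 (m+1), (qint 2 * wcoef (j-1)) • u j := by
      rw [show Icc 2 (m+1) = (Icc 1 m).map (addRightEmbedding 1) from by
            rw [Finset.map_add_right_Icc], Finset.sum_map]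
      apply Finset.sum_congr rfl
      intro k _
      simp [addRightEmbedding]
    rw [e2]
    apply Finset.sum_subset (by intro j; simp only [mem_Icc]; omega)
    intro j hj hj'
    simp only [mem_Icc] at hj hj'
    rcases Nat.lt_or_ge j 2 with h2 | h2
    · have : j = 1 := by omega
      subst this
      simp [wcoef_zero]
    · rw [hu j (by omega), smul_zero]
  have S3 : ∑ k ∈ Icc 1 m, wcoef k • u (k+2)
      = ∑ j ∈ Icc 1 (m+2), wcoef (j-2) • u j := by
    have e3 : ∑ k ∈ Icc 1 m, wcoef k • u (k+2)
        = ∑ j ∈ Icc 3 (m+2), wcoef (j-2) • u j := by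
      rw [show Icc 3 (m+2) = (Icc 1 m).map (addRightEmbedding 2) from by
            rw [Finset.map_add_right_Icc], Finset.sum_map]
      apply Finset.sum_congr rfl
      intro k _
      simp [addRightEmbedding]
    rw [e3]
    apply Finset.sum_subset (by intro j; simp only [mem_Icc]; omega)
    intro j hj hj'
    simp only [mem_Icc] at hj hj'
    have : j - 2 = 0 := by omega
    rw [this, wcoef_zero, zero_smul]
  rw [S1, S2, S3, ← Finset.sum_add_distrib, ← Finset.sum_add_distrib]
  have key : ∀ j ∈ Icc 1 (m+2),
      (wcoef j • u j + (qint 2 * wcoef (j-1)) • u j + wcoef (j-2) • u j)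
        = ((if j = 1 then qint 2 • u 1 else 0) + (if j = 2 then (2:RatFunc ℚ) • u 2 else 0)) := by
    intro j hj
    simp only [mem_Icc] at hj
    rw [← add_smul, ← add_smul]
    match j, hj with
    | 1, _ => simp [wcoef_zero, wcoef_one]
    | 2, _ => simp [dcoef_two]
    | (i+3), _ =>
      have h9 : i + 3 - 1 = i + 2 := by omega
      have h8 : i + 3 - 2 = i + 1 := by omega
      rw [h9, h8, dcoef_ge3, zero_smul]
      simp
  rw [Finset.sum_congr rfl key, Finset.sum_add_distrib,
    Finset.sum_ite_eq' (Icc 1 (m+2)) 1, Finset.sum_ite_eq' (Icc 1 (m+2)) 2]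
  simp only [mem_Icc, if_pos (by omega : 1 ≤ 1 ∧ 1 ≤ m + 2),
    if_pos (by constructor <;> omega : 1 ≤ 2 ∧ 2 ≤ m + 2)]

/-- The commutator of `a k` with `P^{(n)}`: `[a_k, P^{(n)}] = ([2k]/k) P^{(n-k)}`. -/
lemma lemA (b a : ℕ → A) (P : ℤ → A)
    (hP0 : P 0 = 1)
    (hPneg : ∀ k : ℤ, k < 0 → P k = 0)
    (hPrec : ∀ n : ℕ, 1 ≤ n →
      (n : RatFunc ℚ) • P n =
        ∑ m ∈ Finset.Icc 1 n, ((m : RatFunc ℚ) / qint m) • (b m * P ((n : ℤ) - m)))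
    (hcomm : ∀ m m' : ℕ, 1 ≤ m → 1 ≤ m' →
      a m * b m' - b m' * a m =
        if m = m' then (qint (2 * m) * qint m / (m : RatFunc ℚ)) • (1 : A) else 0) :
    ∀ (n : ℤ) (k : ℕ), 1 ≤ k →
      a k * P n - P n * a k = (qint (2 * k) / (k : RatFunc ℚ)) • P (n - k) := by
  suffices h : ∀ N : ℕ, ∀ n : ℤ, n ≤ N → ∀ k : ℕ, 1 ≤ k →
      a k * P n - P n * a k = (qint (2 * k) / (k : RatFunc ℚ)) • P (n - k) by
    intro n k hk
    exact h n.toNat n (Int.self_le_toNat n) k hk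
  intro N
  induction N with
  | zero =>
    intro n hn k hk
    rcases lt_or_eq_of_le hn with h0 | h0
    · rw [hPneg n (by omega), hPneg (n - k) (by omega), mul_zero, zero_mul,
        sub_zero, smul_zero]
    · rw [h0]
      norm_num [hP0]
      rw [hPneg (-(k:ℤ)) (by omega), smul_zero]
  | succ N IH =>
    intro n hn k hk
    rcases lt_or_eq_of_le hn with h0 | h0
    · exact IH n (by omega) k hk
    subst h0
    -- n = N + 1
    set ν : ℕ := N + 1 with hν
    have hν1 : 1 ≤ ν := by omega
    have hνK : ((ν : RatFunc ℚ)) ≠ 0 := Nat.cast_ne_zero.mpr (by omega)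
    have hkK : ((k : RatFunc ℚ)) ≠ 0 := Nat.cast_ne_zero.mpr (by omega)
    have hqk : qint k ≠ 0 := qint_nat_ne_zero k (by omega)
    -- multiply the goal by ν
    have key : (ν : RatFunc ℚ) • (a k * P ν - P ν * a k)
        = (ν : RatFunc ℚ) • ((qint (2 * k) / (k : RatFunc ℚ)) • P ((ν:ℤ) - k)) := by
      have expand : (ν : RatFunc ℚ) • (a k * P ν - P ν * a k)
          = ∑ j ∈ Icc 1 ν, ((j : RatFunc ℚ) / qint j) •
              (a k * (b j * P ((ν:ℤ) - j)) - (b j * P ((ν:ℤ) - j)) * a k) := by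
        rw [smul_sub, ← mul_smul_comm, ← smul_mul_assoc, hPrec ν hν1,
          Finset.mul_sum, Finset.sum_mul, ← Finset.sum_sub_distrib]
        apply Finset.sum_congr rfl
        intro j _
        rw [mul_smul_comm, smul_mul_assoc, ← smul_sub]
      rw [expand]
      have term : ∀ j ∈ Icc 1 ν,
          ((j : RatFunc ℚ) / qint j) •
              (a k * (b j * P ((ν:ℤ) - j)) - (b j * P ((ν:ℤ) - j)) * a k)
          = (qint (2*k) / (k:RatFunc ℚ)) •
              (((j : RatFunc ℚ) / qint j) • (b j * P (((ν:ℤ) - k) - j)))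
            + (if k = j then (((j : RatFunc ℚ) / qint j) * (qint (2*k) * qint k / (k:RatFunc ℚ))) • P ((ν:ℤ) - j) else 0) := by
        intro j hj
        simp only [mem_Icc] at hj
        have split : a k * (b j * P ((ν:ℤ) - j)) - (b j * P ((ν:ℤ) - j)) * a k
            = b j * (a k * P ((ν:ℤ) - j) - P ((ν:ℤ) - j) * a k)
              + (a k * b j - b j * a k) * P ((ν:ℤ) - j) := by
          noncomm_ring
        rw [split, IH ((ν:ℤ) - j) (by omega) k hk, hcomm k j hk hj.1]
        have e1 : b j * ((qint (2*k) / (k:RatFunc ℚ)) • P ((ν:ℤ) - j - k))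
            = (qint (2*k) / (k:RatFunc ℚ)) • (b j * P (((ν:ℤ) - k) - j)) := by
          rw [mul_smul_comm]
          congr 2
          ring_nf
        rw [e1]
        rw [smul_add]
        congr 1
        · rw [smul_comm]
        · split_ifs with hkj
          · rw [smul_mul_assoc, one_mul, smul_smul]
          · rw [zero_mul, smul_zero]
      rw [Finset.sum_congr rfl term, Finset.sum_add_distrib]
      have first : ∑ j ∈ Icc 1 ν, (qint (2*k) / (k:RatFunc ℚ)) •
            (((j : RatFunc ℚ) / qint j) • (b j * P (((ν:ℤ) - k) - j)))
          = (qint (2*k) / (k:RatFunc ℚ)) • ((((ν:ℤ) - k : ℤ) : RatFunc ℚ) • P ((ν:ℤ) - k)) := by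
        rw [← Finset.smul_sum]
        congr 1
        exact sum_rec_ext _ b P hPneg hPrec ν ((ν:ℤ) - k) (by omega)
      have second : ∑ j ∈ Icc 1 ν,
            (if k = j then (((j : RatFunc ℚ) / qint j) * (qint (2*k) * qint k / (k:RatFunc ℚ))) • P ((ν:ℤ) - j) else 0)
          = if k ∈ Icc 1 ν then (((k : RatFunc ℚ) / qint k) * (qint (2*k) * qint k / (k:RatFunc ℚ))) • P ((ν:ℤ) - k) else 0 := by
        rw [Finset.sum_ite_eq]
      rw [first, second]
      have coef : ((k : RatFunc ℚ) / qint k) * (qint (2*k) * qint k / (k:RatFunc ℚ)) = qint (2*k) := by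
        field_simp
      rw [coef]
      by_cases hkν : k ≤ ν
      · rw [if_pos (by simp [mem_Icc]; omega)]
        rw [smul_smul, smul_smul, ← add_smul]
        congr 1
        push_cast
        field_simp
        ring
      · rw [if_neg (by simp [mem_Icc]; omega)]
        rw [hPneg ((ν:ℤ) - k) (by omega)]
        simp
    -- cancel ν
    have := congrArg (fun z => (ν : RatFunc ℚ)⁻¹ • z) key
    simpa [smul_smul, inv_mul_cancel_left₀ hνK] using this

end

/-- The same-node mixed relation:
`Q^{(1^m)} P^{(n)} = P^{(n)} Q^{(1^m)} + [2] P^{(n-1)} Q^{(1^{m-1})} + P^{(n-2)} Q^{(1^{m-2})}`. -/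
theorem heisenberg_Q1P_same_node
    {A : Type*} [Ring A] [Algebra (RatFunc ℚ) A]
    (b a : ℕ → A)
    (hb : ∀ m m' : ℕ, Commute (b m) (b m'))
    (ha : ∀ m m' : ℕ, Commute (a m) (a m'))
    (P Q1 : ℤ → A)
    (hP0 : P 0 = 1)
    (hPneg : ∀ k : ℤ, k < 0 → P k = 0)
    (hPrec : ∀ n : ℕ, 1 ≤ n →
      (n : RatFunc ℚ) • P n =
        ∑ m ∈ Finset.Icc 1 n, ((m : RatFunc ℚ) / qint m) • (b m * P ((n : ℤ) - m)))
    (hQ10 : Q1 0 = 1)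
    (hQ1neg : ∀ k : ℤ, k < 0 → Q1 k = 0)
    (hQ1rec : ∀ n : ℕ, 1 ≤ n →
      (n : RatFunc ℚ) • Q1 n =
        ∑ m ∈ Finset.Icc 1 n,
          ((-1 : RatFunc ℚ) ^ (m + 1) * (m : RatFunc ℚ) / qint m) • (a m * Q1 ((n : ℤ) - m)))
    (hcomm : ∀ m m' : ℕ, 1 ≤ m → 1 ≤ m' →
      a m * b m' - b m' * a m =
        if m = m' then (qint (2 * m) * qint m / (m : RatFunc ℚ)) • (1 : A) else 0)
    (m n : ℕ) :
    Q1 m * P n =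
      P n * Q1 m + qint 2 • (P ((n : ℤ) - 1) * Q1 ((m : ℤ) - 1)) +
        P ((n : ℤ) - 2) * Q1 ((m : ℤ) - 2) := by
  have hA := lemA b a P hP0 hPneg hPrec hcomm
  suffices h : ∀ m : ℕ, ∀ n : ℤ,
      Q1 m * P n = P n * Q1 m + qint 2 • (P (n - 1) * Q1 ((m:ℤ) - 1)) +
        P (n - 2) * Q1 ((m:ℤ) - 2) by
    exact h m n
  intro m
  induction m using Nat.strong_induction_on with
  | _ m IH =>
  intro n
  rcases Nat.eq_zero_or_pos m with hm | hm
  · subst hm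
    simp only [Nat.cast_zero, hQ10, one_mul, mul_one]
    rw [show (0:ℤ) - 1 = -1 from rfl, show (0:ℤ) - 2 = -2 from rfl,
      hQ1neg (-1) (by omega), hQ1neg (-2) (by omega), mul_zero, mul_zero, smul_zero,
      add_zero, add_zero]
  have hm1 : 1 ≤ m := hm
  have hmK : ((m : RatFunc ℚ)) ≠ 0 := Nat.cast_ne_zero.mpr (by omega)
  set cQ : ℕ → RatFunc ℚ := fun k => (-1 : RatFunc ℚ)^(k+1) * (k : RatFunc ℚ) / qint k
    with hcQ
  have hQ1rec' : ∀ N : ℕ, 1 ≤ N →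
      (N : RatFunc ℚ) • Q1 N = ∑ k ∈ Finset.Icc 1 N, cQ k • (a k * Q1 ((N:ℤ) - k)) :=
    hQ1rec
  set u : ℕ → A := fun j => P (n - (j:ℤ)) * Q1 ((m:ℤ) - (j:ℤ)) with hu_def
  have hu0 : ∀ j, m < j → u j = 0 := by
    intro j hj
    simp only [hu_def]
    rw [hQ1neg ((m:ℤ) - j) (by omega), mul_zero]
  have key : (m : RatFunc ℚ) • (Q1 m * P n)
      = (m : RatFunc ℚ) • (P n * Q1 m) +
        (qint 2 * ((m : RatFunc ℚ) - 1) + qint 2) • (P (n-1) * Q1 ((m:ℤ) - 1)) +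
        (((m : RatFunc ℚ) - 2) + 2) • (P (n-2) * Q1 ((m:ℤ) - 2)) := by
    have step1 : (m : RatFunc ℚ) • (Q1 m * P n)
        = ∑ k ∈ Finset.Icc 1 m, cQ k • (a k * (Q1 ((m:ℤ) - k) * P n)) := by
      rw [← smul_mul_assoc, hQ1rec' m hm1, Finset.sum_mul]
      apply Finset.sum_congr rfl
      intro k _
      rw [smul_mul_assoc, mul_assoc]
    have term : ∀ k ∈ Finset.Icc 1 m,
        cQ k • (a k * (Q1 ((m:ℤ) - k) * P n))
        = cQ k • (P n * (a k * Q1 ((m:ℤ) - k)))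
          + cQ k • (qint 2 • (P (n-1) * (a k * Q1 ((m:ℤ) - 1 - k))))
          + cQ k • (P (n-2) * (a k * Q1 ((m:ℤ) - 2 - k)))
          + (wcoef k • u k + (qint 2 * wcoef k) • u (k+1) + wcoef k • u (k+2)) := by
      intro k hk
      simp only [mem_Icc] at hk
      have hk1 : 1 ≤ k := hk.1
      have hA' : ∀ w : ℤ, a k * P w
          = P w * a k + (qint (2 * k) / (k : RatFunc ℚ)) • P (w - k) := by
        intro w
        have := hA w k hk1
        rw [sub_eq_iff_eq_add] at this
        exact this.trans (add_comm _ _)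
      have hIH := IH (m - k) (by omega) n
      have e0 : ((m - k : ℕ) : ℤ) = (m:ℤ) - k := by omega
      rw [e0] at hIH
      have e1 : (m:ℤ) - k - 1 = (m:ℤ) - 1 - k := by ring
      have e2 : (m:ℤ) - k - 2 = (m:ℤ) - 2 - k := by ring
      rw [e1, e2] at hIH
      have hswap : ∀ (w : ℤ) (z : A), a k * (P w * z)
          = P w * (a k * z) + (qint (2 * k) / (k : RatFunc ℚ)) • (P (w - k) * z) := by
        intro w z
        rw [← mul_assoc, hA' w, add_mul, smul_mul_assoc, mul_assoc]
      have eu0 : P (n - k) * Q1 ((m:ℤ) - k) = u k := by simp only [hu_def]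
      have eu1 : P (n - 1 - k) * Q1 ((m:ℤ) - 1 - k) = u (k+1) := by
        simp only [hu_def]
        push_cast
        ring_nf
      have eu2 : P (n - 2 - k) * Q1 ((m:ℤ) - 2 - k) = u (k+2) := by
        simp only [hu_def]
        push_cast
        ring_nf
      have hwc : cQ k * (qint (2 * k) / (k : RatFunc ℚ)) = wcoef k := by
        rw [hcQ]
        exact cQ_mul k (by omega)
      rw [hIH, mul_add, mul_add, mul_smul_comm, hswap n, hswap (n-1), hswap (n-2),
        eu0, eu1, eu2, ← hwc]
      simp only [smul_add, smul_smul]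
      ring_nf
      abel
    rw [step1, Finset.sum_congr rfl term, Finset.sum_add_distrib, Finset.sum_add_distrib,
      Finset.sum_add_distrib]
    have sum1 : ∑ k ∈ Finset.Icc 1 m, cQ k • (P n * (a k * Q1 ((m:ℤ) - k)))
        = (m : RatFunc ℚ) • (P n * Q1 m) := by
      have : ∀ k ∈ Finset.Icc 1 m, cQ k • (P n * (a k * Q1 ((m:ℤ) - k)))
          = P n * (cQ k • (a k * Q1 ((m:ℤ) - k))) := by
        intro k _; rw [mul_smul_comm]
      rw [Finset.sum_congr rfl this, ← Finset.mul_sum,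
        sum_rec_ext cQ a Q1 hQ1neg hQ1rec' m (m:ℤ) (le_refl _)]
      rw [Int.cast_natCast, mul_smul_comm]
    have sum2 : ∑ k ∈ Finset.Icc 1 m, cQ k • (qint 2 • (P (n-1) * (a k * Q1 ((m:ℤ) - 1 - k))))
        = (qint 2 * ((m : RatFunc ℚ) - 1)) • (P (n-1) * Q1 ((m:ℤ) - 1)) := by
      have : ∀ k ∈ Finset.Icc 1 m, cQ k • (qint 2 • (P (n-1) * (a k * Q1 ((m:ℤ) - 1 - k))))
          = qint 2 • (P (n-1) * (cQ k • (a k * Q1 ((m:ℤ) - 1 - k)))) := by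
        intro k _; rw [smul_comm, mul_smul_comm]
      rw [Finset.sum_congr rfl this, ← Finset.smul_sum, ← Finset.mul_sum,
        sum_rec_ext cQ a Q1 hQ1neg hQ1rec' m ((m:ℤ) - 1) (by omega)]
      rw [mul_smul_comm, smul_smul]
      push_cast
      ring_nf
    have sum3 : ∑ k ∈ Finset.Icc 1 m, cQ k • (P (n-2) * (a k * Q1 ((m:ℤ) - 2 - k)))
        = ((m : RatFunc ℚ) - 2) • (P (n-2) * Q1 ((m:ℤ) - 2)) := by
      have : ∀ k ∈ Finset.Icc 1 m, cQ k • (P (n-2) * (a k * Q1 ((m:ℤ) - 2 - k)))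
          = P (n-2) * (cQ k • (a k * Q1 ((m:ℤ) - 2 - k))) := by
        intro k _; rw [mul_smul_comm]
      rw [Finset.sum_congr rfl this, ← Finset.mul_sum,
        sum_rec_ext cQ a Q1 hQ1neg hQ1rec' m ((m:ℤ) - 2) (by omega),
        mul_smul_comm]
      push_cast
      ring_nf
    have sum4 : ∑ k ∈ Finset.Icc 1 m,
        (wcoef k • u k + (qint 2 * wcoef k) • u (k+1) + wcoef k • u (k+2))
        = qint 2 • u 1 + (2 : RatFunc ℚ) • u 2 := ssum m u hu0
    rw [sum1, sum2, sum3, sum4]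
    have eu1 : u 1 = P (n-1) * Q1 ((m:ℤ) - 1) := by simp only [hu_def]; norm_num
    have eu2 : u 2 = P (n-2) * Q1 ((m:ℤ) - 2) := by simp only [hu_def]; norm_num
    rw [eu1, eu2, add_smul, add_smul]
    abel
  -- cancel m
  have final := congrArg (fun z => (m : RatFunc ℚ)⁻¹ • z) key
  simp only [smul_smul, inv_mul_cancel₀ hmK, one_smul] at final
  rw [final, smul_add, smul_add, smul_smul, smul_smul, smul_smul,
    inv_mul_cancel₀ hmK, one_smul]
  have c1 : (m:RatFunc ℚ)⁻¹ * (qint 2 * ((m:RatFunc ℚ) - 1) + qint 2) = qint 2 := by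
    field_simp
    ring
  have c2 : (m:RatFunc ℚ)⁻¹ * ((m:RatFunc ℚ) - 2 + 2) = 1 := by
    field_simp
    ring
  rw [c1, c2, one_smul]
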